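/- Let G = (V, E) be a finite hypergraph and G₁ = (V₁, E₁) be obtained from G by adding a k-dominating set S. If λ is an eigenvalue of L_G with eigenvector x ∈ ℝ^V satisfying Σ_{u∈V} x(u) = 0, then λ + 1 is an eigenvalue of L_{G₁}, with eigenvector the extension x̄ of x to V₁ defined by x̄(v) = x(v) for v ∈ V and x̄(v) = 0 for v ∈ S. -/

import Mathlib

open Finset

/-- The hypergraph Laplacian as an operator on real-valued vertex functions:
`(L_G f)(v) = ∑_{e ∋ v} (1/(|e|-1)) ∑_{u ∈ e} (f v - f u)`. -/
noncomputable def lapOp {V : Type} [Fintype V] [DecidableEq V] (E : Finset (Finset V)) (f : V → ℝ) : V → ℝ :=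
  fun v => ∑ e ∈ E.filter (fun e => v ∈ e), (1 / ((e.card : ℝ) - 1)) * ∑ u ∈ e, (f v - f u)

/-- The matrix of the hypergraph Laplacian. -/
noncomputable def lapMatrix {V : Type} [Fintype V] [DecidableEq V] (E : Finset (Finset V)) : Matrix V V ℝ :=
  Matrix.of fun v w => ∑ e ∈ E.filter (fun e => v ∈ e),
    (1 / ((e.card : ℝ) - 1)) * ((if w = v then (e.card : ℝ) else 0) - (if w ∈ e then 1 else 0))

/-- Edge set obtained from `E` by adding a `k`-dominating set `S = Fin k` of fresh vertices:
the new edges are `S ∪ {u}` for every old vertex `u`. -/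
def domEdges {V : Type} [Fintype V] [DecidableEq V] (E : Finset (Finset V)) (k : ℕ) :
    Finset (Finset (V ⊕ Fin k)) :=
  E.image (Finset.image Sum.inl) ∪
    (Finset.univ : Finset V).image
      (fun u => insert (Sum.inl u) ((Finset.univ : Finset (Fin k)).image Sum.inr))

/-- If `x` is an eigenvector of `L_G` for eigenvalue `lam` with `∑ x = 0`, then its extension
by zero to the dominating vertices is an eigenvector of `L_{G₁}` for `lam + 1`. -/
theorem stmt_1 {V : Type} [Fintype V] [DecidableEq V]
    (E : Finset (Finset V)) (hE : ∀ e ∈ E, 2 ≤ e.card) (k : ℕ) (hk : 0 < k)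
    (lam : ℝ) (x : V → ℝ) (hx : x ≠ 0)
    (heig : lapOp E x = lam • x) (hsum : ∑ u : V, x u = 0) :
    Sum.elim x (fun _ : Fin k => (0 : ℝ)) ≠ 0 ∧
      lapOp (domEdges E k) (Sum.elim x fun _ => 0) =
        (lam + 1) • Sum.elim x fun _ : Fin k => (0 : ℝ) := by
  classical
  set T : Finset (V ⊕ Fin k) := (Finset.univ : Finset (Fin k)).image Sum.inr with hT
  have hinlT : ∀ u : V, Sum.inl u ∉ T := by intro u h; simp [hT] at h
  have hTcard : T.card = k := by
    rw [hT, Finset.card_image_of_injective _ Sum.inr_injective, Finset.card_univ,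
      Fintype.card_fin]
  set nE : V → Finset (V ⊕ Fin k) := fun u => insert (Sum.inl u) T with hnE
  have hnEinj : Function.Injective nE := by
    intro u u' h
    have : Sum.inl u ∈ nE u' := h ▸ Finset.mem_insert_self _ _
    rcases Finset.mem_insert.mp this with h1 | h1
    · exact Sum.inl_injective h1
    · exact absurd h1 (hinlT u)
  have hnEcard : ∀ u, (nE u).card = k + 1 := by
    intro u
    rw [hnE]; rw [Finset.card_insert_of_notMem (hinlT u), hTcard]
  set A : Finset (Finset (V ⊕ Fin k)) := E.image (Finset.image Sum.inl) with hA
  set B : Finset (Finset (V ⊕ Fin k)) := (Finset.univ : Finset V).image nE with hB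
  have hdom : domEdges E k = A ∪ B := rfl
  have hdisj : Disjoint A B := by
    rw [Finset.disjoint_left]
    intro e heA heB
    obtain ⟨e', _, rfl⟩ := Finset.mem_image.mp heA
    obtain ⟨u, _, he⟩ := Finset.mem_image.mp heB
    have h1 : Sum.inr (⟨0, hk⟩ : Fin k) ∈ nE u := by
      rw [hnE]; exact Finset.mem_insert_of_mem (by simp [hT])
    rw [he] at h1
    simp at h1
  set xb : (V ⊕ Fin k) → ℝ := Sum.elim x (fun _ => 0) with hxb
  have hxbl : ∀ a : V, xb (Sum.inl a) = x a := fun a => rfl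
  have hxbr : ∀ j : Fin k, xb (Sum.inr j) = 0 := fun j => rfl
  constructor
  · intro h
    apply hx
    funext v
    have := congrFun h (Sum.inl v)
    exact this
  · funext w
    have hsplit : lapOp (domEdges E k) xb w =
        (∑ e ∈ A.filter (fun e => w ∈ e), (1 / ((e.card : ℝ) - 1)) * ∑ u ∈ e, (xb w - xb u)) +
        (∑ e ∈ B.filter (fun e => w ∈ e), (1 / ((e.card : ℝ) - 1)) * ∑ u ∈ e, (xb w - xb u)) := by
      rw [lapOp, hdom, Finset.filter_union, Finset.sum_union (Finset.disjoint_filter_filter hdisj)]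
    cases w with
    | inl a =>
      have hAsum : (∑ e ∈ A.filter (fun e => Sum.inl a ∈ e),
          (1 / ((e.card : ℝ) - 1)) * ∑ u ∈ e, (xb (Sum.inl a) - xb u)) = lam * x a := by
        have hfil : A.filter (fun e => (Sum.inl a : V ⊕ Fin k) ∈ e) =
            (E.filter (fun e => a ∈ e)).image (Finset.image Sum.inl) := by
          ext e
          simp only [hA, Finset.mem_filter, Finset.mem_image]
          constructor
          · rintro ⟨⟨e', he', rfl⟩, hm⟩
            exact ⟨e', ⟨he', by simpa using hm⟩, rfl⟩
          · rintro ⟨e', ⟨he', ha⟩, rfl⟩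
            exact ⟨⟨e', he', rfl⟩, by simpa using ha⟩
        rw [hfil]
        rw [Finset.sum_image (g := Finset.image (Sum.inl : V → V ⊕ Fin k))
          (fun e _ e' _ h =>
          Finset.image_injective (Sum.inl_injective : Function.Injective (Sum.inl : V → V ⊕ Fin k)) h)]
        have : ∀ e ∈ E.filter (fun e => a ∈ e),
            (1 / (((e.image (Sum.inl : V → V ⊕ Fin k)).card : ℝ) - 1)) *
              ∑ u ∈ e.image (Sum.inl : V → V ⊕ Fin k), (xb (Sum.inl a) - xb u)
            = (1 / ((e.card : ℝ) - 1)) * ∑ u ∈ e, (x a - x u) := by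
          intro e _
          rw [Finset.card_image_of_injective _ Sum.inl_injective,
            Finset.sum_image (fun u _ u' _ h => Sum.inl_injective h)]
          rfl
        rw [Finset.sum_congr rfl this]
        have := congrFun heig a
        rw [lapOp] at this
        simpa using this
      have hBfil : B.filter (fun e => Sum.inl a ∈ e) = {nE a} := by
        rw [hB, Finset.filter_image]
        have : (Finset.univ : Finset V).filter (fun u => Sum.inl a ∈ nE u) = {a} := by
          ext u
          simp only [Finset.mem_filter, Finset.mem_univ, true_and, Finset.mem_singleton, hnE,
            Finset.mem_insert]
          constructor
          · rintro (h | h)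
            · exact (Sum.inl_injective h).symm
            · exact absurd h (hinlT a)
          · rintro rfl; left; rfl
        rw [this, Finset.image_singleton]
      have hBsum : (∑ e ∈ B.filter (fun e => Sum.inl a ∈ e),
          (1 / ((e.card : ℝ) - 1)) * ∑ u ∈ e, (xb (Sum.inl a) - xb u)) = x a := by
        rw [hBfil, Finset.sum_singleton, hnEcard]
        have hs : ∑ u ∈ nE a, (xb (Sum.inl a) - xb u) = k * x a := by
          rw [hnE]
          rw [Finset.sum_insert (hinlT a)]
          have : ∑ u ∈ T, (xb (Sum.inl a) - xb u) = k * x a := by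
            rw [hT, Finset.sum_image (fun u _ u' _ h => Sum.inr_injective h)]
            simp [hxbl, hxbr]
          rw [this, hxbl]
          ring
        rw [hs]
        have hk' : (k : ℝ) ≠ 0 := Nat.cast_ne_zero.mpr hk.ne'
        push_cast
        field_simp
        rw [add_sub_cancel_right, mul_div_cancel_left₀ _ hk']
      rw [hsplit, hAsum, hBsum]
      simp [hxb]
      ring
    | inr j =>
      have hAfil : A.filter (fun e => Sum.inr j ∈ e) = ∅ := by
        apply Finset.filter_false_of_mem
        intro e he
        obtain ⟨e', _, rfl⟩ := Finset.mem_image.mp he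
        simp
      have hBfil : B.filter (fun e => Sum.inr j ∈ e) = B := by
        apply Finset.filter_true_of_mem
        intro e he
        obtain ⟨u, _, rfl⟩ := Finset.mem_image.mp he
        exact Finset.mem_insert_of_mem (by simp [hT])
      have hBsum : (∑ e ∈ B, (1 / ((e.card : ℝ) - 1)) * ∑ u ∈ e, (xb (Sum.inr j) - xb u)) = 0 := by
        rw [hB, Finset.sum_image (fun u _ u' _ h => hnEinj h)]
        have : ∀ u ∈ (Finset.univ : Finset V),
            (1 / (((nE u).card : ℝ) - 1)) * ∑ w ∈ nE u, (xb (Sum.inr j) - xb w)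
            = (1 / (k : ℝ)) * (-(x u)) := by
          intro u _
          rw [hnEcard]
          have : ∑ w ∈ nE u, (xb (Sum.inr j) - xb w) = -(x u) := by
            rw [hnE, Finset.sum_insert (hinlT u)]
            have : ∑ w ∈ T, (xb (Sum.inr j) - xb w) = 0 := by
              rw [hT, Finset.sum_image (fun u _ u' _ h => Sum.inr_injective h)]
              simp [hxbr]
            rw [this, hxbr, hxbl]
            ring
          rw [this]
          push_cast
          ring_nf
        rw [Finset.sum_congr rfl this, ← Finset.mul_sum]
        have h0 : ∑ i : V, -x i = 0 := by
          rw [Finset.sum_neg_distrib, hsum, neg_zero]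
        rw [h0, mul_zero]
      rw [hsplit, hAfil, hBfil, hBsum]
      simp [hxb]
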